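/- Seed mutation transforms the exchange matrix by quiver mutation: with e'_k as in seed mutation at index j, the matrix b'_{kl} = {e'_k, e'_l} equals the Fomin–Zelevinsky mutation μ_j of the matrix b_{kl} = {e_k, e_l}. -/

import Mathlib

/-- Fomin–Zelevinsky matrix mutation at vertex `j`. -/
def mutMat (n : ℕ) (B : Matrix (Fin n) (Fin n) ℤ) (j : Fin n) :
    Matrix (Fin n) (Fin n) ℤ :=
  fun i i' => if i = j ∨ i' = j then -B i i'
    else B i i' + Int.sign (B i j) * max (B i j * B j i') 0

lemma key_id (a c : ℤ) : c * max a 0 + a * max (-c) 0 = a.sign * max (c * a) 0 := by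
  rcases lt_trichotomy a 0 with ha | ha | ha
  · rcases lt_trichotomy c 0 with hc | hc | hc
    · rw [Int.sign_eq_neg_one_of_neg ha, max_eq_right ha.le,
        max_eq_left (by linarith), max_eq_left (mul_pos_of_neg_of_neg hc ha).le]; ring
    · simp [hc]
    · rw [Int.sign_eq_neg_one_of_neg ha, max_eq_right ha.le,
        max_eq_right (by linarith), max_eq_right (by nlinarith)]; ring
  · simp [ha]
  · rcases lt_trichotomy c 0 with hc | hc | hc
    · rw [Int.sign_eq_one_of_pos ha, max_eq_left ha.le,
        max_eq_left (by linarith), max_eq_right (by nlinarith)]; ring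
    · simp [hc]
    · rw [Int.sign_eq_one_of_pos ha, max_eq_left ha.le,
        max_eq_right (by linarith), max_eq_left (by nlinarith)]; ring

/-- Seed mutation transforms the exchange matrix by matrix mutation: with
`e'_j = -e_j` and `e'_k = e_k + max({e_k,e_j},0) • e_j` for `k ≠ j`, the matrix
`b'_{kl} = {e'_k, e'_l}` equals `μ_j` of `b_{kl} = {e_k, e_l}`. -/
theorem stmt6 (n : ℕ) (N : Type*) [AddCommGroup N] [Module ℤ N]
    (b : Module.Basis (Fin n) ℤ N) (B : N →ₗ[ℤ] N →ₗ[ℤ] ℤ)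
    (hskew : ∀ x y, B y x = -B x y) (j : Fin n)
    (e' : Fin n → N)
    (he' : ∀ k, e' k = if k = j then -(b j) else b k + (max (B (b k) (b j)) 0) • b j) :
    ∀ k l, B (e' k) (e' l) = mutMat n (fun i i' => B (b i) (b i')) j k l := by
  have hjj : B (b j) (b j) = 0 := by have := hskew (b j) (b j); linarith
  intro k l
  by_cases hk : k = j <;> by_cases hl : l = j <;>
    simp [he', hk, hl, mutMat, hjj, map_add, map_neg, map_smul, smul_eq_mul, mul_comm]
  · have hlj : B (b l) (b j) = -B (b j) (b l) := hskew _ _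
    rw [hlj]
    linarith [key_id ((B (b k)) (b j)) ((B (b j)) (b l))]
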